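/- Let n ≥ 1, δ ∈ (0,1], and let r ≥ 1 be an integer. Let U be a nonempty finite set with |U| ≤ n, and let M̂ be a matching whose matched vertex set V(M̂) satisfies V(M̂) ⊆ U (so |V(M̂)| = 2|M̂|). Sample Y_1, …, Y_r independently and uniformly at random from U, let Y := |{i ∈ [r] : Y_i ∈ V(M̂)}|, and set μ̃ := |U|·Y/(2r) − δ·n/2. Then Pr[μ̃ > |M̂| or μ̃ < |M̂| − δ·n] ≤ 2·exp(−2·δ²·r). -/

import Mathlib

attribute [local instance] Classical.propDecidable

section AuxHoeffding

open Real Finset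

-- monotone helpers
private lemma mono_Ici {g g' : ℝ → ℝ} (hd : ∀ x, HasDerivAt g (g' x) x)
    (h0 : ∀ x, 0 < x → 0 ≤ g' x) {a : ℝ} (ha : 0 ≤ a) : g 0 ≤ g a := by
  have := monotoneOn_of_deriv_nonneg (convex_Ici (0:ℝ))
    (fun x _ => (hd x).continuousAt.continuousWithinAt)
    (fun x hx => ((hd x).differentiableAt).differentiableWithinAt)
    (fun x hx => by
      rw [interior_Ici] at hx
      rw [(hd x).deriv]; exact h0 x hx)
  exact this (Set.self_mem_Ici) ha ha

private lemma anti_Iic {g g' : ℝ → ℝ} (hd : ∀ x, HasDerivAt g (g' x) x)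
    (h0 : ∀ x, x < 0 → g' x ≤ 0) {a : ℝ} (ha : a ≤ 0) : g 0 ≤ g a := by
  have := antitoneOn_of_deriv_nonpos (convex_Iic (0:ℝ))
    (fun x _ => (hd x).continuousAt.continuousWithinAt)
    (fun x hx => ((hd x).differentiableAt).differentiableWithinAt)
    (fun x hx => by
      rw [interior_Iic] at hx
      rw [(hd x).deriv]; exact h0 x hx)
  exact this ha (Set.self_mem_Iic) ha

/-- Hoeffding's lemma for a Bernoulli(p) variable (mgf form). -/
lemma hoeff_core (p q t : ℝ) (hp : 0 ≤ p) (hq : 0 ≤ q) (hpq : p + q = 1) :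
    p * Real.exp t + q ≤ Real.exp (t * p + t ^ 2 / 8) := by
  rcases eq_or_lt_of_le hp with h0 | hp
  · have hq1 : q = 1 := by linarith
    rw [← h0, hq1]
    simpa using Real.one_le_exp (by nlinarith [sq_nonneg t] : (0:ℝ) ≤ t * 0 + t ^ 2 / 8)
  · set D : ℝ → ℝ := fun x => p * Real.exp x + q with hDdef
    have hD : ∀ x, 0 < D x := fun x =>
      add_pos_of_pos_of_nonneg (mul_pos hp (Real.exp_pos x)) hq
    have hDd : ∀ x, HasDerivAt D (p * Real.exp x) x := fun x => by
      exact ((Real.hasDerivAt_exp x).const_mul p).add_const q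
    set φ : ℝ → ℝ := fun x => p * Real.exp x / D x with hφdef
    have hφd : ∀ x, HasDerivAt φ (p * Real.exp x * q / (D x) ^ 2) x := by
      intro x
      have h := ((Real.hasDerivAt_exp x).const_mul p).div (hDd x) (ne_of_gt (hD x))
      refine h.congr_deriv ?_
      have hne := ne_of_gt (hD x)
      congr 1
      simp only [hDdef]
      ring
    have hφ'le : ∀ x, p * Real.exp x * q / (D x) ^ 2 ≤ 1 / 4 := by
      intro x
      rw [div_le_iff₀ (by positivity)]
      have h4 : 4 * (p * Real.exp x) * q ≤ (p * Real.exp x + q) ^ 2 := by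
        nlinarith [sq_nonneg (p * Real.exp x - q)]
      simp only [hDdef]
      nlinarith
    have hφ'0 : ∀ x, 0 ≤ p * Real.exp x * q / (D x) ^ 2 := by
      intro x; positivity
    have hφ0 : φ 0 = p := by
      simp [hφdef, hDdef, hpq]
    -- ψ x = x/4 - (φ x - p)
    have key1 : ∀ x, 0 ≤ x → φ x - p ≤ x / 4 := by
      intro x hx
      have hd : ∀ y, HasDerivAt (fun y => y / 4 - (φ y - p)) (1 / 4 - p * Real.exp y * q / (D y) ^ 2) y := by
        intro y
        exact ((hasDerivAt_id y).div_const 4).sub ((hφd y).sub_const p)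
      have := mono_Ici hd (fun y _ => by linarith [hφ'le y]) hx
      simp [hφ0] at this
      linarith
    have key2 : ∀ x, x ≤ 0 → x / 4 ≤ φ x - p := by
      intro x hx
      have hd : ∀ y, HasDerivAt (fun y => (φ y - p) - y / 4) (p * Real.exp y * q / (D y) ^ 2 - 1 / 4) y := by
        intro y
        exact ((hφd y).sub_const p).sub ((hasDerivAt_id y).div_const 4)
      have := anti_Iic hd (fun y _ => by linarith [hφ'le y]) hx
      simp [hφ0] at this
      linarith
    -- G x = x*p + x^2/8 - log (D x)
    have hfd : ∀ x, HasDerivAt (fun x => Real.log (D x)) (φ x) x := by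
      intro x
      have := (hDd x).log (ne_of_gt (hD x))
      simpa [hφdef] using this
    have hGd : ∀ x, HasDerivAt (fun x => x * p + x ^ 2 / 8 - Real.log (D x))
        (p + x / 4 - φ x) x := by
      intro x
      have h1 : HasDerivAt (fun x : ℝ => x * p + x ^ 2 / 8) (p + x / 4) x := by
        have := ((hasDerivAt_id x).mul_const p).add
          (((hasDerivAt_pow 2 x)).div_const 8)
        refine this.congr_deriv ?_
        rw [show (2:ℕ) - 1 = 1 from rfl, pow_one]; push_cast; ring
      exact h1.sub (hfd x)
    have hG : 0 ≤ t * p + t ^ 2 / 8 - Real.log (D t) := by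
      rcases le_total 0 t with ht | ht
      · have := mono_Ici hGd (fun y hy => by
          have := key1 y (le_of_lt hy); linarith) ht
        simp only [hDdef] at this
        simp [hpq] at this
        linarith
      · have := anti_Iic hGd (fun y hy => by
          have := key2 y (le_of_lt hy); linarith) ht
        simp only [hDdef] at this
        simp [hpq] at this
        linarith
    have hlog : Real.log (D t) ≤ t * p + t ^ 2 / 8 := by linarith
    calc p * Real.exp t + q = D t := rfl
      _ = Real.exp (Real.log (D t)) := (Real.exp_log (hD t)).symm
      _ ≤ Real.exp (t * p + t ^ 2 / 8) := Real.exp_le_exp.2 hlog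


lemma chernoff_count (r : ℕ) {S : Type*} [Fintype S] [Nonempty S]
    (Q : S → Prop) [DecidablePred Q] (δ : ℝ) (hδ : 0 < δ) :
    ((univ.filter fun ω : Fin r → S =>
        (r : ℝ) * (((univ.filter Q).card : ℝ) / (Fintype.card S : ℝ) + δ) ≤
          ((univ.filter fun i => Q (ω i)).card : ℝ)).card : ℝ) ≤
      (Fintype.card S : ℝ) ^ r * Real.exp (-(2 * δ ^ 2 * r)) := by
  classical
  set u : ℕ := Fintype.card S with hu
  set m : ℕ := (univ.filter Q).card with hm
  have hu0 : 0 < u := Fintype.card_pos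
  have hu0R : (0:ℝ) < u := by exact_mod_cast hu0
  have hmu : m ≤ u := by
    simpa [hu, hm] using card_filter_le (univ : Finset S) Q
  set p : ℝ := (m : ℝ) / u with hp
  have hp0 : 0 ≤ p := by positivity
  have hq0 : 0 ≤ 1 - p := by
    have : p ≤ 1 := by
      rw [hp, div_le_one hu0R]
      exact_mod_cast hmu
    linarith
  set lam : ℝ := 4 * δ with hlam
  have hlam0 : 0 ≤ lam := by positivity
  set g : S → ℝ := fun x => if Q x then Real.exp lam else 1 with hg
  have hpt : ∀ ω : Fin r → S,
      Real.exp (lam * ((univ.filter fun i => Q (ω i)).card : ℝ)) = ∏ i, g (ω i) := by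
    intro ω
    rw [mul_comm, Real.exp_nat_mul]
    simp only [hg]
    rw [Finset.prod_ite]
    simp
  have hsum_g : ∑ x, g x = (m : ℝ) * Real.exp lam + ((u : ℝ) - m) := by
    simp only [hg]
    have hcompl : (univ.filter fun x => ¬ Q x).card = u - m := by
      have key := Finset.card_filter_add_card_filter_not (s := (univ : Finset S)) (p := Q)
      rw [Finset.card_univ] at key
      omega
    rw [Finset.sum_ite, Finset.sum_const, Finset.sum_const, nsmul_eq_mul, nsmul_eq_mul,
      mul_one, hcompl, Nat.cast_sub hmu]
  have hMGF : ∑ ω : Fin r → S, Real.exp (lam * ((univ.filter fun i => Q (ω i)).card : ℝ))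
      = ((m : ℝ) * Real.exp lam + ((u : ℝ) - m)) ^ r := by
    rw [← hsum_g, Fintype.sum_pow]
    exact Finset.sum_congr rfl fun ω _ => hpt ω
  set s : ℝ := (r : ℝ) * (p + δ) with hs
  set E : Finset (Fin r → S) := univ.filter fun ω =>
      s ≤ ((univ.filter fun i => Q (ω i)).card : ℝ) with hE
  -- Markov step
  have hmarkov : (E.card : ℝ) * Real.exp (lam * s) ≤
      ((m : ℝ) * Real.exp lam + ((u : ℝ) - m)) ^ r := by
    rw [← hMGF]
    calc (E.card : ℝ) * Real.exp (lam * s)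
        = ∑ _ω ∈ E, Real.exp (lam * s) := by rw [Finset.sum_const]; ring
      _ ≤ ∑ ω ∈ E, Real.exp (lam * ((univ.filter fun i => Q (ω i)).card : ℝ)) := by
          apply Finset.sum_le_sum
          intro ω hω
          apply Real.exp_le_exp.2
          apply mul_le_mul_of_nonneg_left _ hlam0
          exact (Finset.mem_filter.1 hω).2
      _ ≤ ∑ ω : Fin r → S, Real.exp (lam * ((univ.filter fun i => Q (ω i)).card : ℝ)) := by
          apply Finset.sum_le_sum_of_subset_of_nonneg (Finset.filter_subset _ _)
          intro ω _ _
          positivity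
  -- rewrite the base
  have hbase : (m : ℝ) * Real.exp lam + ((u : ℝ) - m) = (u : ℝ) * (p * Real.exp lam + (1 - p)) := by
    have hup : (u : ℝ) * p = m := by rw [hp]; field_simp
    linear_combination (Real.exp lam - 1) * hup.symm
  have hcore : p * Real.exp lam + (1 - p) ≤ Real.exp (lam * p + lam ^ 2 / 8) :=
    hoeff_core p (1 - p) lam hp0 hq0 (by ring)
  have hpow : ((m : ℝ) * Real.exp lam + ((u : ℝ) - m)) ^ r ≤
      (u : ℝ) ^ r * Real.exp ((r : ℝ) * (lam * p + lam ^ 2 / 8)) := by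
    rw [hbase, mul_pow]
    apply mul_le_mul_of_nonneg_left _ (by positivity)
    calc (p * Real.exp lam + (1 - p)) ^ r ≤ (Real.exp (lam * p + lam ^ 2 / 8)) ^ r := by
          apply pow_le_pow_left₀ (by positivity) hcore
      _ = Real.exp ((r : ℝ) * (lam * p + lam ^ 2 / 8)) := by
          rw [← Real.exp_nat_mul]
  have hEexp : (E.card : ℝ) ≤ (u : ℝ) ^ r * Real.exp ((r : ℝ) * (lam * p + lam ^ 2 / 8) - lam * s) := by
    have hepos : (0:ℝ) < Real.exp (lam * s) := Real.exp_pos _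
    rw [Real.exp_sub, ← mul_div_assoc, le_div_iff₀ hepos]
    exact hmarkov.trans hpow
  have hfinal : (r : ℝ) * (lam * p + lam ^ 2 / 8) - lam * s = -(2 * δ ^ 2 * r) := by
    simp only [hs, hlam]
    ring
  rw [hfinal] at hEexp
  exact hEexp


lemma match_card {α : Type*} [DecidableEq α]
    (U : Finset α) (Mh : Finset (Sym2 α))
    [DecidablePred fun x : α => ∃ e ∈ Mh, x ∈ e]
    (hdisj : ∀ e ∈ Mh, ∀ f ∈ Mh, e ≠ f → ∀ v : α, v ∈ e → v ∉ f)
    (hnd : ∀ e ∈ Mh, ¬ e.IsDiag)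
    (hsub : ∀ e ∈ Mh, ∀ v ∈ e, v ∈ U) :
    (U.filter fun x => ∃ e ∈ Mh, x ∈ e).card = 2 * Mh.card := by
  classical
  have hout : ∀ e : Sym2 α, Sym2.mk e.out.1 e.out.2 = e := by
    intro e; rw [Sym2.mk]; exact e.out_eq
  have hmem : ∀ (e : Sym2 α) (x : α), x ∈ ({e.out.1, e.out.2} : Finset α) ↔ x ∈ e := by
    intro e x
    rw [Finset.mem_insert, Finset.mem_singleton]
    conv_rhs => rw [← hout e]
    exact (Sym2.mem_iff).symm
  have hUf : (U.filter fun x => ∃ e ∈ Mh, x ∈ e) =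
      Mh.biUnion (fun e => {e.out.1, e.out.2}) := by
    ext x
    simp only [Finset.mem_filter, Finset.mem_biUnion]
    constructor
    · rintro ⟨-, e, he, hx⟩; exact ⟨e, he, (hmem e x).2 hx⟩
    · rintro ⟨e, he, hx⟩
      have hx' := (hmem e x).1 hx
      exact ⟨hsub e he x hx', e, he, hx'⟩
  rw [hUf, Finset.card_biUnion]
  · have h2 : ∀ e ∈ Mh, ({e.out.1, e.out.2} : Finset α).card = 2 := by
      intro e he
      rw [Finset.card_insert_of_notMem, Finset.card_singleton]
      simp only [Finset.mem_singleton]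
      intro h
      apply hnd e he
      rw [← hout e]
      exact Sym2.mk_isDiag_iff.2 h
    rw [Finset.sum_congr rfl h2, Finset.sum_const, smul_eq_mul, mul_comm]
  · intro e he f hf hef
    simp only [Finset.disjoint_left]
    intro x hx hx'
    exact hdisj e he f hf hef x ((hmem e x).1 hx) ((hmem f x).1 hx')


end AuxHoeffding

open Finset

set_option maxHeartbeats 1000000

/-- Sampling `r` vertices independently and uniformly from the nonempty finite set `U`
(the sample space is `Fin r → {x // x ∈ U}` with the uniform distribution, so
probabilities are ratios of outcome counts), where `M̂` is a matching (a set of pairwise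
disjoint unordered pairs of distinct vertices) whose matched vertex set is contained in `U`,
let `Y` be the number of samples that are matched by `M̂` and
`μ̃ := |U|·Y/(2r) − δ·n/2`.  If `|U| ≤ n`, then
`Pr[μ̃ > |M̂| or μ̃ < |M̂| − δ·n] ≤ 2·exp(−2·δ²·r)`. -/
theorem stmt_3 {α : Type*} (n r : ℕ) (hn : 1 ≤ n) (hr : 1 ≤ r)
    (δ : ℝ) (hδ0 : 0 < δ) (hδ1 : δ ≤ 1)
    (U : Finset α) (hUne : U.Nonempty) (hUn : U.card ≤ n)
    (Mh : Finset (Sym2 α))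
    (hdisj : ∀ e ∈ Mh, ∀ f ∈ Mh, e ≠ f → ∀ v : α, v ∈ e → v ∉ f)
    (hnd : ∀ e ∈ Mh, ¬ e.IsDiag)
    (hsub : ∀ e ∈ Mh, ∀ v ∈ e, v ∈ U) :
    (((Finset.univ.filter fun ω : Fin r → {x // x ∈ U} =>
        let Y : ℕ := (Finset.univ.filter fun i : Fin r => ∃ e ∈ Mh, (ω i).1 ∈ e).card
        let μt : ℝ := (U.card : ℝ) * Y / (2 * r) - δ * n / 2
        μt > (Mh.card : ℝ) ∨ μt < (Mh.card : ℝ) - δ * n).card : ℝ) /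
      (Fintype.card (Fin r → {x // x ∈ U}) : ℝ)) ≤
      2 * Real.exp (-(2 * δ ^ 2 * r)) := by
  classical
  have hSne : Nonempty {x // x ∈ U} := ⟨⟨hUne.choose, hUne.choose_spec⟩⟩
  set Q : {x // x ∈ U} → Prop := fun x => ∃ e ∈ Mh, x.1 ∈ e with hQdef
  have hcardS : Fintype.card {x // x ∈ U} = U.card := Fintype.card_coe U
  have hcardΩ : (Fintype.card (Fin r → {x // x ∈ U})) = U.card ^ r := by
    rw [Fintype.card_fun, hcardS, Fintype.card_fin]
  set u : ℕ := U.card with hudef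
  have hu0 : 0 < u := Finset.card_pos.2 hUne
  have hu0R : (0:ℝ) < u := by exact_mod_cast hu0
  have hr0R : (0:ℝ) < r := by exact_mod_cast hr
  set m : ℕ := (univ.filter Q).card with hmdef
  have hmU : m = (U.filter fun x => ∃ e ∈ Mh, x ∈ e).card := by
    rw [hmdef, univ_eq_attach, Finset.filter_attach (fun a => ∃ e ∈ Mh, a ∈ e) U,
      Finset.card_map, Finset.card_attach]
  have hm2 : m = 2 * Mh.card := by
    rw [hmU]; exact match_card U Mh hdisj hnd hsub
  have hmu : m ≤ u := by
    rw [hmU, hudef]; exact Finset.card_filter_le _ _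
  -- the two tail events
  set Eplus : Finset (Fin r → {x // x ∈ U}) := univ.filter fun ω =>
      (r : ℝ) * ((m : ℝ) / u + δ) ≤ ((univ.filter fun i => Q (ω i)).card : ℝ) with hEp
  set Eminus : Finset (Fin r → {x // x ∈ U}) := univ.filter fun ω =>
      (r : ℝ) * (((univ.filter fun x => ¬ Q x).card : ℝ) / u + δ) ≤
        ((univ.filter fun i => ¬ Q (ω i)).card : ℝ) with hEm
  have hchp : (Eplus.card : ℝ) ≤ (u : ℝ) ^ r * Real.exp (-(2 * δ ^ 2 * r)) := by
    have := chernoff_count r Q δ hδ0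
    rw [hcardS] at this
    exact this
  have hchm : (Eminus.card : ℝ) ≤ (u : ℝ) ^ r * Real.exp (-(2 * δ ^ 2 * r)) := by
    have := chernoff_count r (fun x => ¬ Q x) δ hδ0
    rw [hcardS] at this
    exact this
  -- inclusion of the main event
  have hsubE : (Finset.univ.filter fun ω : Fin r → {x // x ∈ U} =>
        let Y : ℕ := (Finset.univ.filter fun i : Fin r => ∃ e ∈ Mh, (ω i).1 ∈ e).card
        let μt : ℝ := (U.card : ℝ) * Y / (2 * r) - δ * n / 2
        μt > (Mh.card : ℝ) ∨ μt < (Mh.card : ℝ) - δ * n) ⊆ Eplus ∪ Eminus := by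
    intro ω hω
    rw [Finset.mem_filter] at hω
    obtain ⟨-, hω⟩ := hω
    set Y : ℕ := (Finset.univ.filter fun i : Fin r => ∃ e ∈ Mh, (ω i).1 ∈ e).card with hY
    have hYQ : Y = (univ.filter fun i => Q (ω i)).card := rfl
    have hYc : (univ.filter fun i => ¬ Q (ω i)).card = r - Y := by
      have key := Finset.card_filter_add_card_filter_not
        (s := (univ : Finset (Fin r))) (p := fun i => Q (ω i))
      rw [Finset.card_univ, Fintype.card_fin] at key
      omega
    have hYr : Y ≤ r := by
      rw [hYQ]
      calc (univ.filter fun i => Q (ω i)).card ≤ (univ : Finset (Fin r)).card :=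
            Finset.card_filter_le _ _
        _ = r := by rw [Finset.card_univ, Fintype.card_fin]
    have hMm : (Mh.card : ℝ) = (m : ℝ) / 2 := by
      rw [hm2]; push_cast; ring
    have hun : (u : ℝ) ≤ (n : ℝ) := by exact_mod_cast hUn
    rw [Finset.mem_union]
    rcases hω with h | h
    · left
      rw [hEp, Finset.mem_filter]
      refine ⟨Finset.mem_univ _, ?_⟩
      rw [← hYQ]
      -- h : u * Y / (2r) - δn/2 > m/2
      rw [hMm] at h
      have h2 : ((m : ℝ) / 2 + δ * n / 2) * (2 * r) < (u : ℝ) * Y := by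
        rw [← lt_div_iff₀ (by positivity : (0:ℝ) < 2 * r)]
        linarith
      have hc : ((m:ℝ)/u)*u = m := div_mul_cancel₀ _ hu0R.ne'
      have key : (r:ℝ) * ((m:ℝ)/u + δ) * u ≤ ((univ.filter fun i => Q (ω i)).card : ℝ) * u := by
        have expand : (r:ℝ) * ((m:ℝ)/u + δ) * u = (r:ℝ)*m + δ*(r:ℝ)*u := by
          calc (r:ℝ) * ((m:ℝ)/u + δ) * u = (r:ℝ)*(((m:ℝ)/u)*u) + δ*(r:ℝ)*u := by ring
            _ = (r:ℝ)*m + δ*(r:ℝ)*u := by rw [hc]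
        rw [expand, ← hYQ]
        nlinarith [mul_nonneg (mul_nonneg hδ0.le hr0R.le) (sub_nonneg.2 hun)]
      exact le_of_mul_le_mul_right key hu0R
    · right
      rw [hEm, Finset.mem_filter]
      refine ⟨Finset.mem_univ _, ?_⟩
      have hcompl : ((univ.filter fun x : {x // x ∈ U} => ¬ Q x).card : ℝ) = (u : ℝ) - m := by
        have key := Finset.card_filter_add_card_filter_not
          (s := (univ : Finset {x // x ∈ U})) (p := Q)
        rw [Finset.card_univ, hcardS] at key
        have : (univ.filter fun x : {x // x ∈ U} => ¬ Q x).card = u - m := by omega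
        rw [this, Nat.cast_sub hmu]
      have hYc' : ((univ.filter fun i => ¬ Q (ω i)).card : ℝ) = (r : ℝ) - Y := by
        rw [hYc, Nat.cast_sub hYr]
      rw [hcompl, hYc']
      rw [hMm] at h
      have h2 : (u : ℝ) * Y < ((m : ℝ) / 2 - δ * n / 2) * (2 * r) := by
        rw [← div_lt_iff₀ (by positivity : (0:ℝ) < 2 * r)]
        linarith
      have hc : (((u:ℝ)-m)/u)*u = (u:ℝ)-m := div_mul_cancel₀ _ hu0R.ne'
      have key : (r:ℝ) * (((u:ℝ)-m)/u + δ) * u ≤ ((r:ℝ) - Y) * u := by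
        have expand : (r:ℝ) * (((u:ℝ)-m)/u + δ) * u = (r:ℝ)*((u:ℝ)-m) + δ*(r:ℝ)*u := by
          calc (r:ℝ) * (((u:ℝ)-m)/u + δ) * u = (r:ℝ)*((((u:ℝ)-m)/u)*u) + δ*(r:ℝ)*u := by ring
            _ = (r:ℝ)*((u:ℝ)-m) + δ*(r:ℝ)*u := by rw [hc]
        rw [expand]
        nlinarith [mul_nonneg (mul_nonneg hδ0.le hr0R.le) (sub_nonneg.2 hun)]
      exact le_of_mul_le_mul_right key hu0R
  -- conclude
  have hcard : ((Finset.univ.filter fun ω : Fin r → {x // x ∈ U} =>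
        let Y : ℕ := (Finset.univ.filter fun i : Fin r => ∃ e ∈ Mh, (ω i).1 ∈ e).card
        let μt : ℝ := (U.card : ℝ) * Y / (2 * r) - δ * n / 2
        μt > (Mh.card : ℝ) ∨ μt < (Mh.card : ℝ) - δ * n).card : ℝ) ≤
      2 * ((u : ℝ) ^ r * Real.exp (-(2 * δ ^ 2 * r))) := by
    have h1 := Finset.card_le_card hsubE
    have h2 := Finset.card_union_le Eplus Eminus
    have : ((Eplus ∪ Eminus).card : ℝ) ≤ (Eplus.card : ℝ) + Eminus.card := by exact_mod_cast h2
    have h1' : ((Finset.univ.filter fun ω : Fin r → {x // x ∈ U} =>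
        let Y : ℕ := (Finset.univ.filter fun i : Fin r => ∃ e ∈ Mh, (ω i).1 ∈ e).card
        let μt : ℝ := (U.card : ℝ) * Y / (2 * r) - δ * n / 2
        μt > (Mh.card : ℝ) ∨ μt < (Mh.card : ℝ) - δ * n).card : ℝ) ≤ ((Eplus ∪ Eminus).card : ℝ) := by
      exact_mod_cast h1
    linarith
  rw [hcardΩ]
  rw [div_le_iff₀ (by positivity)]
  push_cast
  calc ((Finset.univ.filter _).card : ℝ) ≤ 2 * ((u : ℝ) ^ r * Real.exp (-(2 * δ ^ 2 * r))) := hcard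
    _ = 2 * Real.exp (-(2 * δ ^ 2 * ↑r)) * (u : ℝ) ^ r := by ring
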